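/- Let K be a finite field with q elements, let C ⊆ K^n × K^n be a K-linear subspace with dim_K C = n − k, and let d ≥ 1 be such that every nonzero element of the symplectic dual C∗ has symplectic weight at least d. If the puncture code P(C) contains a vector x of Hamming weight r ≥ 1, then there exists a K-linear subspace D ⊆ K^r × K^r such that D is symplectic self-orthogonal, dim_K D ≤ n − k, and every nonzero element of the symplectic dual D∗ has symplectic weight at least d. -/

import Mathlib

/-- The symplectic inner product on `K^n × K^n`:
`(v,w) ∗ (v',w') = ∑ i, (v i * w' i - v' i * w i)`. -/
def sympIP {K : Type*} [Field K] {n : ℕ}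
    (a b : (Fin n → K) × (Fin n → K)) : K :=
  ∑ i, (a.1 i * b.2 i - b.1 i * a.2 i)

/-- The symplectic weight of `(v,w) ∈ K^n × K^n`: the number of indices `i`
with `(v i, w i) ≠ (0,0)`. -/
noncomputable def sympWeight {K : Type*} [Zero K] {n : ℕ}
    (a : (Fin n → K) × (Fin n → K)) : ℕ :=
  Set.ncard {i : Fin n | a.1 i ≠ 0 ∨ a.2 i ≠ 0}

def shortMap {K : Type*} [Field K] {n r : ℕ} (x : Fin n → K)
    (e : Fin r → Fin n) :
    ((Fin n → K) × (Fin n → K)) →ₗ[K] ((Fin r → K) × (Fin r → K)) where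
  toFun p := (fun j => x (e j) * p.1 (e j), fun j => p.2 (e j))
  map_add' a b := by
    refine Prod.ext ?_ ?_ <;> funext j <;> simp [mul_add]
  map_smul' c a := by
    refine Prod.ext ?_ ?_ <;> funext j <;> simp [mul_comm, mul_left_comm]

lemma sum_reindex {K : Type*} [Field K] [DecidableEq K] {n r : ℕ} (x : Fin n → K)
    (e : Fin r ≃ {i : Fin n // x i ≠ 0}) (g : Fin n → K)
    (hg : ∀ i, x i = 0 → g i = 0) :
    ∑ j : Fin r, g ((e j : Fin n)) = ∑ i, g i := by
  rw [Equiv.sum_comp e (fun s : {i : Fin n // x i ≠ 0} => g s)]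
  rw [← Finset.sum_subtype (Finset.univ.filter fun i => x i ≠ 0)
    (by simp) g]
  exact Finset.sum_filter_of_ne (fun i _ h => fun hx => h (hg i hx))


/-- Theorem 5 (shortening quantum codes): let `K` be a finite field with `q`
elements, `C ⊆ K^n × K^n` a `K`-linear subspace of dimension `n - k` such that
every nonzero element of the symplectic dual `C∗` has symplectic weight at
least `d ≥ 1`.  If the puncture code `P(C)` contains a vector `x` of Hamming
weight `r ≥ 1`, then there is a symplectic self-orthogonal `K`-linear subspace
`D ⊆ K^r × K^r` of dimension at most `n - k` such that every nonzero element of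
the symplectic dual `D∗` has symplectic weight at least `d`. -/
theorem puncture_code_shortening
    (q : ℕ) (K : Type*) [Field K] [Fintype K] [DecidableEq K]
    (hK : Fintype.card K = q)
    (n k d : ℕ) (hk : k ≤ n) (hd : 1 ≤ d)
    (C : Submodule K ((Fin n → K) × (Fin n → K)))
    (hdim : Module.finrank K C = n - k)
    (hdual : ∀ a : (Fin n → K) × (Fin n → K),
      (∀ c ∈ C, sympIP a c = 0) → a ≠ 0 → d ≤ sympWeight a)
    (x : Fin n → K) (r : ℕ) (hr : 1 ≤ r) (hxwt : hammingNorm x = r)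
    (hxP : ∀ a ∈ C, ∀ b ∈ C,
      ∑ i, x i * (a.1 i * b.2 i - b.1 i * a.2 i) = 0) :
    ∃ D : Submodule K ((Fin r → K) × (Fin r → K)),
      (∀ a ∈ D, ∀ b ∈ D, sympIP a b = 0) ∧
      Module.finrank K D ≤ n - k ∧
      (∀ a : (Fin r → K) × (Fin r → K),
        (∀ c ∈ D, sympIP a c = 0) → a ≠ 0 → d ≤ sympWeight a) := by
  have hcard : Fintype.card {i : Fin n // x i ≠ 0} = r := by
    rw [← hxwt]; simp [hammingNorm, Fintype.card_subtype]
  let e : Fin r ≃ {i : Fin n // x i ≠ 0} :=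
    (Fintype.equivFinOfCardEq hcard).symm
  let f := shortMap (K := K) x (fun j => (e j : Fin n))
  refine ⟨C.map f, ?_, ?_, ?_⟩
  · rintro _ ⟨a, ha, rfl⟩ _ ⟨b, hb, rfl⟩
    show ∑ j, (x (e j) * a.1 (e j) * b.2 (e j)
        - x (e j) * b.1 (e j) * a.2 (e j)) = 0
    have hre := sum_reindex x e
      (fun i => x i * a.1 i * b.2 i - x i * b.1 i * a.2 i)
      (fun i hx => by simp [hx])
    rw [hre]
    have h0 := hxP a ha b hb
    rw [← h0]
    exact Finset.sum_congr rfl (fun i _ => by ring)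
  · rw [← hdim]
    exact Submodule.finrank_map_le f C
  · intro a hao ha0
    set b : (Fin n → K) × (Fin n → K) :=
      (fun i => if h : x i ≠ 0 then a.1 (e.symm ⟨i, h⟩) else 0,
       fun i => if h : x i ≠ 0 then x i * a.2 (e.symm ⟨i, h⟩) else 0) with hb
    have hbC : ∀ c ∈ C, sympIP b c = 0 := by
      intro c hc
      have h1 := hao (f c) ⟨c, hc, rfl⟩
      show ∑ i, (b.1 i * c.2 i - c.1 i * b.2 i) = 0
      rw [← sum_reindex x e (fun i => b.1 i * c.2 i - c.1 i * b.2 i)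
        (fun i hx => by simp [hb, hx])]
      have key : ∑ j, (b.1 (e j) * c.2 (e j) - c.1 (e j) * b.2 (e j))
          = sympIP a (f c) := by
        refine Finset.sum_congr rfl (fun j _ => ?_)
        have hx : x (e j) ≠ 0 := (e j).2
        simp only [hb, dif_pos hx, Subtype.coe_eta, Equiv.symm_apply_apply]
        show a.1 j * c.2 (e j) - c.1 (e j) * (x (e j) * a.2 j)
          = a.1 j * (x (e j) * c.1 (e j), fun j => c.2 (e j)).2 j
            - (fun j => x (e j) * c.1 (e j)) j * a.2 j
        ring
      rw [key, h1]
    have hb0 : b ≠ 0 := by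
      have hex : ∃ j, a.1 j ≠ 0 ∨ a.2 j ≠ 0 := by
        by_contra hno
        push_neg at hno
        apply ha0
        refine Prod.ext (funext fun j => (hno j).1) (funext fun j => (hno j).2)
      obtain ⟨j, hj⟩ := hex
      intro h
      have hx : x (e j) ≠ 0 := (e j).2
      have e1 : b.1 (e j) = a.1 j := by
        simp [hb, dif_pos hx, hx]
      have e2 : b.2 (e j) = x (e j) * a.2 j := by
        simp [hb, dif_pos hx, hx]
      rw [h] at e1 e2
      simp only [Prod.fst_zero, Prod.snd_zero, Pi.zero_apply] at e1 e2
      rcases hj with hj | hj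
      · exact hj e1.symm
      · exact hj ((mul_eq_zero.mp e2.symm).resolve_left hx)
    have hwd := hdual b hbC hb0
    refine le_trans hwd ?_
    have hfin : ({j : Fin r | a.1 j ≠ 0 ∨ a.2 j ≠ 0}).Finite :=
      Set.toFinite _
    refine Set.ncard_le_ncard_of_injOn
      (fun i => if h : x i ≠ 0 then ((e.symm ⟨i, h⟩ : Fin r)) else ⟨0, hr⟩)
      ?_ ?_ hfin
    · rintro i hi
      have hx : x i ≠ 0 := by
        rcases hi with hi | hi
        · by_contra hx; exact hi (by simp [hb, hx])
        · by_contra hx; exact hi (by simp [hb, hx])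
      simp only [dif_pos hx]
      rcases hi with hi | hi
      · left
        simpa [hb, dif_pos hx, hx] using hi
      · right
        intro h0
        apply hi
        simp [hb, dif_pos hx, h0]
    · intro i hi i' hi' hii
      have hx : x i ≠ 0 := by
        rcases hi with hi | hi
        · by_contra hx; exact hi (by simp [hb, hx])
        · by_contra hx; exact hi (by simp [hb, hx])
      have hx' : x i' ≠ 0 := by
        rcases hi' with hi' | hi'
        · by_contra hx'; exact hi' (by simp [hb, hx'])
        · by_contra hx'; exact hi' (by simp [hb, hx'])
      have hii' : (e.symm ⟨i, hx⟩ : Fin r) = e.symm ⟨i', hx'⟩ := by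
        simpa [dif_pos hx, dif_pos hx'] using hii
      exact congrArg Subtype.val (e.symm.injective hii')
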